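/- For every n ≥ 3, the set W≤5_bf(n) is closed under composition of transformations; no element of W≤5_bf(n) focuses any pair of distinct states of Q_M; and every pair of distinct states of Q_M is colliding in W≤5_bf(n). -/

import Mathlib

/-- The set of "middle" states `Q_M = {1, …, n−3}` of `Q = {0, …, n−1}`. -/
def QM (n : ℕ) : Set (Fin n) := {q : Fin n | 1 ≤ q.val ∧ q.val ≤ n - 3}

/-- The set `B_bf(n)` of transformations `t` of `Q = {0, …, n−1}` such that
`0` is not in the image of `t`, `(n−1)t = n−1`, `(n−2)t = n−1`, and for all
`j ≥ 1`, `0t^j = n−1` or `0t^j ≠ qt^j` for all `q` with `0 < q < n−1`. -/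
def Bbf (n : ℕ) (hn : 3 ≤ n) : Set (Fin n → Fin n) :=
  {t : Fin n → Fin n |
    (∀ q : Fin n, t q ≠ ⟨0, by omega⟩) ∧
    t ⟨n - 1, by omega⟩ = ⟨n - 1, by omega⟩ ∧
    t ⟨n - 2, by omega⟩ = ⟨n - 1, by omega⟩ ∧
    ∀ j : ℕ, 1 ≤ j →
      t^[j] ⟨0, by omega⟩ = ⟨n - 1, by omega⟩ ∨
        ∀ q : Fin n, 0 < q.val → q.val < n - 1 → t^[j] ⟨0, by omega⟩ ≠ t^[j] q}

/-- The set `W≥6_bf(n)`: transformations `t ∈ B_bf(n)` such that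
`0t ∈ {n−2, n−1}`, or `0t ∈ Q_M` and `qt ∈ {n−2, n−1}` for all `q ∈ Q_M`. -/
def Wbf6 (n : ℕ) (hn : 3 ≤ n) : Set (Fin n → Fin n) :=
  {t : Fin n → Fin n | t ∈ Bbf n hn ∧
    (t ⟨0, by omega⟩ = ⟨n - 2, by omega⟩ ∨ t ⟨0, by omega⟩ = ⟨n - 1, by omega⟩ ∨
      (t ⟨0, by omega⟩ ∈ QM n ∧
        ∀ q ∈ QM n, t q = ⟨n - 2, by omega⟩ ∨ t q = ⟨n - 1, by omega⟩))}

/-- The set `W≤5_bf(n)`: transformations `t ∈ B_bf(n)` such that for all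
distinct `p, q ∈ Q_M`, either `pt = qt = n−1` or `pt ≠ qt`. -/
def Wbf5 (n : ℕ) (hn : 3 ≤ n) : Set (Fin n → Fin n) :=
  {t : Fin n → Fin n | t ∈ Bbf n hn ∧
    ∀ p ∈ QM n, ∀ q ∈ QM n, p ≠ q →
      (t p = ⟨n - 1, by omega⟩ ∧ t q = ⟨n - 1, by omega⟩) ∨ t p ≠ t q}

/-- The (unordered) pair `{p, q}` of distinct states of `Q_M` is colliding in `T`:
there are `t ∈ T` and `r ∈ Q_M` with `0t = p` and `rt = q`. -/
def Colliding (n : ℕ) (hn : 3 ≤ n) (T : Set (Fin n → Fin n)) (p q : Fin n) : Prop :=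
  p ∈ QM n ∧ q ∈ QM n ∧ p ≠ q ∧
    ∃ t ∈ T, t ⟨0, by omega⟩ = p ∧ ∃ r ∈ QM n, t r = q

/-- A transformation `u` focuses the pair `{p, q}` of distinct states if
`pu = qu` and `pu ∈ Q_M ∪ {n−2}`. -/
def Focuses (n : ℕ) (hn : 3 ≤ n) (u : Fin n → Fin n) (p q : Fin n) : Prop :=
  p ≠ q ∧ u p = u q ∧ (u p ∈ QM n ∨ u p = ⟨n - 2, by omega⟩)

/-- `G` generates `W` as a semigroup: `W` is the set of all compositions
`g₁g₂⋯g_k` (apply `g₁` first) of nonempty finite sequences of elements of `G`. -/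
def Generates (n : ℕ) (G W : Set (Fin n → Fin n)) : Prop :=
  W = {t : Fin n → Fin n | ∃ l : List (Fin n → Fin n), l ≠ [] ∧ (∀ g ∈ l, g ∈ G) ∧
    t = l.foldl (fun a g => g ∘ a) id}

/-- injective away from n-1 -/
def Inj' (n : ℕ) (hn : 3 ≤ n) (u : Fin n → Fin n) : Prop :=
  ∀ p q : Fin n, p ≠ q → u p = u q → u p = ⟨n - 1, by omega⟩

lemma wbf5_inj {n : ℕ} (hn : 3 ≤ n) {u : Fin n → Fin n} (hu : u ∈ Wbf5 n hn) :
    Inj' n hn u := by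
  obtain ⟨⟨_, hfix, hn2, hj⟩, h5⟩ := hu
  intro p q hpq heq
  -- classify p and q
  have hcase : ∀ a b : Fin n, a ≠ b → u a = u b → u a = ⟨n - 1, by omega⟩ := by
    intro a b hab hequ
    rcases Nat.lt_or_ge a.val (n-2) with ha | ha
    · rcases Nat.lt_or_ge b.val (n-2) with hb | hb
      · -- both < n-2
        rcases Nat.eq_zero_or_pos a.val with ha0 | ha0
        · -- a = 0
          have hae : a = ⟨0, by omega⟩ := Fin.ext (by simp; omega)
          rcases hj 1 le_rfl with h | h
          · simpa [hae] using h
          · exfalso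
            have := h b (by omega) (by omega)
            simp only [Function.iterate_one] at this
            exact this (hae ▸ hequ)
        · rcases Nat.eq_zero_or_pos b.val with hb0 | hb0
          · have hbe : b = ⟨0, by omega⟩ := Fin.ext (by simp; omega)
            rcases hj 1 le_rfl with h | h
            · rw [hequ]; simpa [hbe] using h
            · exfalso
              have := h a (by omega) (by omega)
              simp only [Function.iterate_one] at this
              exact this (hbe ▸ hequ.symm)
          · -- both middle
            have ha' : a ∈ QM n := ⟨ha0, by omega⟩
            have hb' : b ∈ QM n := ⟨hb0, by omega⟩
            rcases h5 a ha' b hb' hab with ⟨h1, _⟩ | h1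
            · exact h1
            · exact absurd hequ h1
      · -- b.val ≥ n-2 : u b = n-1
        have hb' : u b = ⟨n - 1, by omega⟩ := by
          rcases Nat.lt_or_ge b.val (n-1) with h | h
          · have : b = ⟨n-2, by omega⟩ := Fin.ext (by simp; omega)
            exact this ▸ hn2
          · have : b = ⟨n-1, by omega⟩ := Fin.ext (by simp; have := b.isLt; omega)
            exact this ▸ hfix
        rw [hequ]; exact hb'
    · have ha' : u a = ⟨n - 1, by omega⟩ := by
        rcases Nat.lt_or_ge a.val (n-1) with h | h
        · have : a = ⟨n-2, by omega⟩ := Fin.ext (by simp; omega)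
          exact this ▸ hn2
        · have : a = ⟨n-1, by omega⟩ := Fin.ext (by simp; have := a.isLt; omega)
          exact this ▸ hfix
      exact ha'
  exact hcase p q hpq heq

lemma inj_comp {n : ℕ} (hn : 3 ≤ n) {s t : Fin n → Fin n}
    (hs : Inj' n hn s) (ht : Inj' n hn t) (htf : t ⟨n-1, by omega⟩ = ⟨n-1, by omega⟩) :
    Inj' n hn (t ∘ s) := by
  intro p q hpq heq
  by_cases h : s p = s q
  · have := hs p q hpq h
    simp only [Function.comp_apply, this, htf]
  · exact ht (s p) (s q) h heq

lemma inj_iter {n : ℕ} (hn : 3 ≤ n) {v : Fin n → Fin n}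
    (hv : Inj' n hn v) (hvf : v ⟨n-1, by omega⟩ = ⟨n-1, by omega⟩) :
    ∀ j : ℕ, 1 ≤ j → Inj' n hn (v^[j]) := by
  intro j hj
  induction j with
  | zero => omega
  | succ k ih =>
    rcases Nat.eq_zero_or_pos k with hk | hk
    · subst hk; simpa using hv
    · rw [Function.iterate_succ']
      exact inj_comp hn (ih hk) hv hvf

lemma bbf_j_of_inj {n : ℕ} (hn : 3 ≤ n) {v : Fin n → Fin n}
    (hv : Inj' n hn v) (hvf : v ⟨n-1, by omega⟩ = ⟨n-1, by omega⟩) :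
    ∀ j : ℕ, 1 ≤ j →
      v^[j] ⟨0, by omega⟩ = ⟨n - 1, by omega⟩ ∨
        ∀ q : Fin n, 0 < q.val → q.val < n - 1 → v^[j] ⟨0, by omega⟩ ≠ v^[j] q := by
  intro j hj
  by_cases h : v^[j] ⟨0, by omega⟩ = ⟨n - 1, by omega⟩
  · exact Or.inl h
  · refine Or.inr fun q hq1 hq2 heq => h ?_
    exact inj_iter hn hv hvf j hj ⟨0, by omega⟩ q (by intro he; rw [Fin.ext_iff] at he; simp at he; omega) heq

lemma wbf5_cond_of_inj {n : ℕ} (hn : 3 ≤ n) {u : Fin n → Fin n} (hu : Inj' n hn u) :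
    ∀ p ∈ QM n, ∀ q ∈ QM n, p ≠ q →
      (u p = ⟨n - 1, by omega⟩ ∧ u q = ⟨n - 1, by omega⟩) ∨ u p ≠ u q := by
  intro p _ q _ hpq
  by_cases h : u p = u q
  · exact Or.inl ⟨hu p q hpq h, h ▸ hu p q hpq h⟩
  · exact Or.inr h

set_option maxHeartbeats 1000000 in

theorem stmt10 (n : ℕ) (hn : 3 ≤ n) :
    (∀ s ∈ Wbf5 n hn, ∀ t ∈ Wbf5 n hn, (t ∘ s) ∈ Wbf5 n hn) ∧
    (∀ u ∈ Wbf5 n hn, ∀ p ∈ QM n, ∀ q ∈ QM n, p ≠ q → ¬ Focuses n hn u p q) ∧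
    (∀ p ∈ QM n, ∀ q ∈ QM n, p ≠ q → Colliding n hn (Wbf5 n hn) p q) := by
  refine ⟨?_, ?_, ?_⟩
  · intro s hs t ht
    have his := wbf5_inj hn hs
    have hit := wbf5_inj hn ht
    obtain ⟨⟨hs0, hsf, hs2, _⟩, _⟩ := hs
    obtain ⟨⟨ht0, htf, ht2, _⟩, _⟩ := ht
    have hcf : (t ∘ s) ⟨n-1, by omega⟩ = ⟨n-1, by omega⟩ := by
      simp only [Function.comp_apply, hsf, htf]
    have hci : Inj' n hn (t ∘ s) := inj_comp hn his hit htf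
    exact ⟨⟨fun q => ht0 (s q), hcf,
      by simp only [Function.comp_apply, hs2, htf],
      bbf_j_of_inj hn hci hcf⟩, wbf5_cond_of_inj hn hci⟩
  · rintro u hu p hp q hq hpq ⟨_, hequ, hmem⟩
    rcases hu.2 p hp q hq hpq with ⟨h1, _⟩ | h1
    · rcases hmem with hm | hm
      · rw [h1] at hm
        obtain ⟨hm1, hm2⟩ := hm
        simp only [Fin.val_mk] at hm1 hm2
        omega
      · rw [h1] at hm
        rw [Fin.ext_iff] at hm
        simp at hm
        omega
    · exact h1 hequ
  · intro p hp q hq hpq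
    obtain ⟨hp1, hp3⟩ := hp
    obtain ⟨hq1, hq3⟩ := hq
    have hn4 : 4 ≤ n := by omega
    set t : Fin n → Fin n := fun x =>
      if x = ⟨0, by omega⟩ then p else if x = p then q else ⟨n - 1, by omega⟩ with htdef
    have key : ∀ x : Fin n, t x = ⟨n - 1, by omega⟩ ∨
        (x = ⟨0, by omega⟩ ∧ t x = p) ∨ (x = p ∧ t x = q) := by
      intro x
      simp only [htdef]
      split_ifs with h1 h2
      · exact Or.inr (Or.inl ⟨h1, rfl⟩)
      · exact Or.inr (Or.inr ⟨h2, rfl⟩)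
      · exact Or.inl rfl
    have hpne : p ≠ (⟨n - 1, by omega⟩ : Fin n) := by
      intro h; rw [Fin.ext_iff] at h; simp at h; omega
    have hqne : q ≠ (⟨n - 1, by omega⟩ : Fin n) := by
      intro h; rw [Fin.ext_iff] at h; simp at h; omega
    have htinj : Inj' n hn t := by
      intro a b hab heq
      rcases key a with ha | ⟨ha, ha'⟩ | ⟨ha, ha'⟩
      · exact ha
      · rcases key b with hb | ⟨hb, hb'⟩ | ⟨hb, hb'⟩
        · exact heq.trans hb
        · exact absurd (ha.trans hb.symm) hab
        · exact absurd ((ha'.symm.trans heq).trans hb') hpq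
      · rcases key b with hb | ⟨hb, hb'⟩ | ⟨hb, hb'⟩
        · exact heq.trans hb
        · exact absurd (((ha'.symm.trans heq).trans hb').symm) hpq
        · exact absurd (ha.trans hb.symm) hab
    have ht0 : t ⟨0, by omega⟩ = p := by simp [htdef]
    have htp : t p = q := by
      have hp0 : p ≠ (⟨0, by omega⟩ : Fin n) := by
        intro h; rw [Fin.ext_iff] at h; simp at h; omega
      simp [htdef, hp0]
    have htf : t ⟨n - 1, by omega⟩ = ⟨n - 1, by omega⟩ := by
      rcases key ⟨n - 1, by omega⟩ with h | ⟨h, h'⟩ | ⟨h, h'⟩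
      · exact h
      · rw [Fin.ext_iff] at h; simp at h; omega
      · exact absurd h.symm hpne
    have ht2 : t ⟨n - 2, by omega⟩ = ⟨n - 1, by omega⟩ := by
      rcases key ⟨n - 2, by omega⟩ with h | ⟨h, h'⟩ | ⟨h, h'⟩
      · exact h
      · rw [Fin.ext_iff] at h; simp at h; omega
      · exfalso; rw [Fin.ext_iff] at h; simp at h; omega
    have htz : ∀ x : Fin n, t x ≠ ⟨0, by omega⟩ := by
      intro x hx
      have hval := congrArg Fin.val hx
      simp only [Fin.val_mk] at hval
      rcases key x with h | ⟨_, h⟩ | ⟨_, h⟩ <;>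
        (have h2 := congrArg Fin.val h; simp -failIfUnchanged only [Fin.val_mk] at h2; omega)
    exact ⟨⟨hp1, hp3⟩, ⟨hq1, hq3⟩, hpq,
      t, ⟨⟨htz, htf, ht2, bbf_j_of_inj hn htinj htf⟩, wbf5_cond_of_inj hn htinj⟩,
      ht0, p, ⟨hp1, hp3⟩, htp⟩
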